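/- If Re(c - a - b2) > 0, then F1(a; b1, b2; c; x, 1) = (Gamma(c) Gamma(c-a-b2) / (Gamma(c-a) Gamma(c-b2))) * 2F1(a, b1; c-b2; x) for |x| < 1. -/

import Mathlib

noncomputable def poch (a : ℂ) (n : ℕ) : ℂ := (ascPochhammer ℂ n).eval a

noncomputable def hpg21 (A B C z : ℂ) : ℂ :=
  ∑' n : ℕ, poch A n * poch B n / (poch C n * (n.factorial : ℂ)) * z ^ n

noncomputable def F1 (a b1 b2 c x y : ℂ) : ℂ :=
  ∑' p : ℕ × ℕ, poch a (p.1 + p.2) * poch b1 p.1 * poch b2 p.2 /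
    (poch c (p.1 + p.2) * (p.1.factorial : ℂ) * (p.2.factorial : ℂ)) * x ^ p.1 * y ^ p.2

open Finset Filter Complex Topology

lemma poch_zero (z : ℂ) : poch z 0 = 1 := by simp [poch]

lemma poch_succ (z : ℂ) (n : ℕ) : poch z (n + 1) = poch z n * (z + n) :=
  ascPochhammer_succ_eval n z

lemma poch_eq_prod (z : ℂ) (n : ℕ) : poch z n = ∏ j ∈ range n, (z + j) := by
  induction n with
  | zero => simp [poch]
  | succ n ih => rw [poch_succ, prod_range_succ, ih]

lemma poch_ne_zero {z : ℂ} (hz : ∀ j : ℕ, z ≠ -(j : ℂ)) (n : ℕ) : poch z n ≠ 0 := by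
  rw [poch_eq_prod]
  exact Finset.prod_ne_zero_iff.mpr fun j _ h => hz j (by linear_combination h)

lemma poch_add (z : ℂ) (n m : ℕ) : poch z (n + m) = poch z n * poch (z + n) m := by
  rw [poch_eq_prod, poch_eq_prod, poch_eq_prod, prod_range_add]
  congr 1
  refine Finset.prod_congr rfl fun j _ => ?_
  push_cast; ring

lemma poch_shift (z : ℂ) (m : ℕ) : z * poch (z + 1) m = poch z m * (z + m) := by
  have h1 : poch z (m + 1) = poch z m * (z + m) := poch_succ z m
  have h2 : poch z (m + 1) = z * poch (z + 1) m := by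
    rw [show m + 1 = 1 + m by ring, poch_add, poch_succ, poch_zero]
    simp
  rw [← h2, h1]

lemma Gamma_poch {z : ℂ} (hz : ∀ j : ℕ, z ≠ -(j : ℂ)) (n : ℕ) :
    Complex.Gamma (z + n) = poch z n * Complex.Gamma z := by
  induction n with
  | zero => simp [poch_zero]
  | succ n ih =>
    have hne : z + n ≠ 0 := by
      intro h; exact hz n (by linear_combination h)
    push_cast
    rw [show z + ((n : ℂ) + 1) = (z + n) + 1 by ring, Complex.Gamma_add_one _ hne, ih, poch_succ]
    ring

lemma norm_poch_le (z : ℂ) (n : ℕ) : ‖poch z n‖ ≤ ∏ j ∈ range n, (‖z‖ + j) := by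
  rw [poch_eq_prod]
  refine (Finset.norm_prod_le _ _).trans ?_
  refine Finset.prod_le_prod (fun _ _ => norm_nonneg _) fun j _ => ?_
  refine (norm_add_le _ _).trans ?_
  simp

lemma norm_poch_eq (z : ℂ) (n : ℕ) : ‖poch z n‖ = ∏ j ∈ range n, ‖z + j‖ := by
  rw [poch_eq_prod]; exact norm_prod _ _

lemma prod_le_norm_poch {z : ℂ} {u : ℝ} (hu : ∀ j : ℕ, u + j ≤ ‖z + j‖) (h0 : 0 ≤ u) (n : ℕ) :
    ∏ j ∈ range n, (u + j) ≤ ‖poch z n‖ := by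
  rw [norm_poch_eq]
  exact Finset.prod_le_prod (fun j _ => by positivity) fun j _ => hu j

-- assume w1 contents; for testing, re-declare

noncomputable def gterm (A B C : ℂ) (m : ℕ) : ℂ :=
  poch A m * poch B m / (poch C m * (m.factorial : ℂ))

lemma exists_bound_of_eventually {u : ℕ → ℝ} (h0 : ∀ m, 0 ≤ u m) {B : ℝ}
    (h : ∀ᶠ m in atTop, u m ≤ B) : ∃ K : ℝ, 0 ≤ K ∧ ∀ m, u m ≤ K := by
  obtain ⟨N, hN⟩ := eventually_atTop.mp h
  have hs : (0:ℝ) ≤ ∑ i ∈ range N, u i := Finset.sum_nonneg fun i _ => h0 i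
  refine ⟨max B 0 + ∑ i ∈ range N, u i, by positivity, fun m => ?_⟩
  rcases le_or_gt N m with hm | hm
  · have : (0:ℝ) ≤ ∑ i ∈ range N, u i := Finset.sum_nonneg fun i _ => h0 i
    calc u m ≤ B := hN m hm
      _ ≤ max B 0 + ∑ i ∈ range N, u i := by
        have := le_max_left B 0; linarith
  · calc u m ≤ ∑ i ∈ range N, u i :=
        Finset.single_le_sum (fun i _ => h0 i) (mem_range.mpr hm)
      _ ≤ _ := by have := le_max_right B 0; linarith

lemma poch_eventually_zero {z : ℂ} (k : ℕ) (hz : z = -(k:ℂ)) {m : ℕ} (hm : k < m) :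
    poch z m = 0 := by
  rw [poch_eq_prod]
  exact Finset.prod_eq_zero (mem_range.mpr hm) (by rw [hz]; ring)

lemma poch_eq_gammaSeq {z : ℂ} {m : ℕ} (hm : 1 ≤ m) :
    poch z (m + 1) = (m:ℂ) ^ z * (m.factorial : ℂ) / GammaSeq z m := by
  have hm0 : (m:ℂ) ≠ 0 := Nat.cast_ne_zero.mpr (by omega)
  have hnum : (m:ℂ) ^ z * (m.factorial : ℂ) ≠ 0 := by
    refine mul_ne_zero ?_ (Nat.cast_ne_zero.mpr m.factorial_ne_zero)
    simp [Complex.cpow_eq_zero_iff, hm0]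
  have hGS : GammaSeq z m = (m:ℂ) ^ z * (m.factorial : ℂ) / poch z (m + 1) := by
    rw [Complex.GammaSeq, poch_eq_prod]
  rw [hGS, div_div_eq_mul_div, mul_div_assoc]
  field_simp
  rw [mul_assoc, mul_div_assoc, div_self hnum, mul_one]


lemma gterm_nondegen_eq {A B C : ℂ} (hA : ∀ j : ℕ, A ≠ -(j:ℂ)) (hB : ∀ j : ℕ, B ≠ -(j:ℂ))
    (hC : ∀ j : ℕ, C ≠ -(j:ℂ)) {m : ℕ} (hm : 1 ≤ m) :
    gterm A B C (m+1) = (m:ℂ) ^ (A + B - C) * ((m.factorial : ℂ) / ((m+1).factorial : ℂ)) *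
      (GammaSeq C m / (GammaSeq A m * GammaSeq B m)) := by
  have hm0 : (m:ℂ) ≠ 0 := Nat.cast_ne_zero.mpr (by omega)
  have hfac : (m.factorial : ℂ) ≠ 0 := Nat.cast_ne_zero.mpr m.factorial_ne_zero
  have hfac1 : ((m+1).factorial : ℂ) ≠ 0 := Nat.cast_ne_zero.mpr (m+1).factorial_ne_zero
  have hGSne : ∀ z : ℂ, (∀ j : ℕ, z ≠ -(j:ℂ)) → GammaSeq z m ≠ 0 := by
    intro z hz
    have h1 : GammaSeq z m = (m:ℂ) ^ z * (m.factorial : ℂ) / poch z (m + 1) := by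
      rw [Complex.GammaSeq, poch_eq_prod]
    rw [h1]
    have : (m:ℂ) ^ z ≠ 0 := by simp [Complex.cpow_eq_zero_iff, hm0]
    exact div_ne_zero (mul_ne_zero this hfac) (poch_ne_zero hz _)
  have hpow : (m:ℂ) ^ A * (m:ℂ) ^ B = (m:ℂ) ^ (A + B - C) * (m:ℂ) ^ C := by
    rw [← Complex.cpow_add _ _ hm0, ← Complex.cpow_add _ _ hm0]
    ring_nf
  rw [gterm, poch_eq_gammaSeq hm, poch_eq_gammaSeq hm, poch_eq_gammaSeq hm]
  have hCp : (m:ℂ) ^ C ≠ 0 := by simp [Complex.cpow_eq_zero_iff, hm0]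
  field_simp [hGSne A hA, hGSne B hB, hGSne C hC]
  linear_combination hpow

lemma gterm_v_bound (A B C : ℂ) (hC : ∀ n : ℕ, C ≠ -(n:ℂ)) (hε : 0 < (C-A-B).re) :
    ∃ K : ℝ, 0 ≤ K ∧ ∀ m : ℕ,
      ‖gterm A B C m‖ * ((m:ℝ)+1) ^ ((1:ℝ) + (C-A-B).re) ≤ K := by
  set ε := (C-A-B).re with hεdef
  by_cases hA : ∃ k : ℕ, A = -(k:ℂ)
  · obtain ⟨k, hk⟩ := hA
    refine exists_bound_of_eventually (fun m => by positivity) (B := 0) ?_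
    filter_upwards [eventually_gt_atTop k] with m hm
    simp [gterm, poch_eventually_zero k hk hm]
  by_cases hB : ∃ k : ℕ, B = -(k:ℂ)
  · obtain ⟨k, hk⟩ := hB
    refine exists_bound_of_eventually (fun m => by positivity) (B := 0) ?_
    filter_upwards [eventually_gt_atTop k] with m hm
    simp [gterm, poch_eventually_zero k hk hm]
  push_neg at hA hB
  set Q : ℕ → ℝ := fun n => ‖GammaSeq C n / (GammaSeq A n * GammaSeq B n)‖ with hQdef
  set L : ℝ := ‖Complex.Gamma C / (Complex.Gamma A * Complex.Gamma B)‖ with hLdef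
  have hQ : Tendsto Q atTop (𝓝 L) := by
    refine Filter.Tendsto.norm ?_
    exact (Complex.GammaSeq_tendsto_Gamma C).div
      ((Complex.GammaSeq_tendsto_Gamma A).mul (Complex.GammaSeq_tendsto_Gamma B))
      (mul_ne_zero (Complex.Gamma_ne_zero hA) (Complex.Gamma_ne_zero hB))
  have hL0 : 0 ≤ L := norm_nonneg _
  have hev1 : ∀ᶠ n in atTop, Q n ≤ L + 1 :=
    (hQ.eventually_lt_const (by linarith : L < L + 1)).mono fun n h => h.le
  obtain ⟨N, hN⟩ := eventually_atTop.mp hev1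
  refine exists_bound_of_eventually (fun m => by positivity)
    (B := 2 ^ ((1:ℝ) + ε) * (L + 1)) ?_
  refine eventually_atTop.mpr ⟨max (N+1) 3, fun m hm => ?_⟩
  obtain ⟨n, rfl⟩ : ∃ n, m = n + 1 := ⟨m - 1, by omega⟩
  have hn2 : 2 ≤ n := by omega
  have hnN : N ≤ n := by omega
  have hnpos : (0:ℝ) < n := by
    have : (2:ℝ) ≤ n := by exact_mod_cast hn2
    linarith
  rw [gterm_nondegen_eq hA hB hC (by omega), norm_mul, norm_mul]
  have e1 : ‖(n:ℂ) ^ (A+B-C)‖ = (n:ℝ) ^ (-ε) := by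
    rw [show ((n:ℂ)) = ((n:ℝ):ℂ) by push_cast; rfl,
      Complex.norm_cpow_eq_rpow_re_of_pos hnpos]
    congr 1
    simp [hεdef, Complex.sub_re, Complex.add_re]
    ring
  have e2 : ‖((n.factorial:ℂ) / (((n+1).factorial : ℕ) :ℂ))‖
      = 1 / ((n:ℝ)+1) := by
    rw [norm_div]
    simp only [Complex.norm_natCast]
    rw [Nat.factorial_succ]
    have : (n.factorial : ℝ) ≠ 0 := Nat.cast_ne_zero.mpr n.factorial_ne_zero
    push_cast
    field_simp
  rw [e1, e2]
  have hQn : Q n ≤ L + 1 := hN n hnN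
  have hQn0 : 0 ≤ Q n := norm_nonneg _
  have hcast : ((n+1 : ℕ):ℝ) + 1 = (n:ℝ) + 2 := by push_cast; ring
  rw [hcast]
  have h1 : ((n:ℝ)+2) ^ ((1:ℝ)+ε) ≤ 2 ^ ((1:ℝ)+ε) * (n:ℝ) ^ ((1:ℝ)+ε) := by
    rw [← Real.mul_rpow (by norm_num) (by positivity)]
    have h2n : (2:ℝ) ≤ (n:ℝ) := by exact_mod_cast hn2
    exact Real.rpow_le_rpow (by positivity) (by linarith) (by linarith)
  have h2 : (n:ℝ) ^ (-ε) * (n:ℝ) ^ ((1:ℝ)+ε) = n := by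
    rw [← Real.rpow_add hnpos]
    norm_num
  have ha0 : (0:ℝ) < (n:ℝ) ^ (-ε) := Real.rpow_pos_of_pos hnpos _
  calc (n:ℝ) ^ (-ε) * (1/((n:ℝ)+1)) * Q n * ((n:ℝ)+2) ^ ((1:ℝ)+ε)
      ≤ (n:ℝ) ^ (-ε) * (1/((n:ℝ)+1)) * (L+1) * (2 ^ ((1:ℝ)+ε) * (n:ℝ) ^ ((1:ℝ)+ε)) := by
        gcongr
    _ = 2 ^ ((1:ℝ)+ε) * (L+1) * (((n:ℝ) ^ (-ε) * (n:ℝ) ^ ((1:ℝ)+ε))/((n:ℝ)+1)) := by ring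
    _ = 2 ^ ((1:ℝ)+ε) * (L+1) * ((n:ℝ)/((n:ℝ)+1)) := by rw [h2]
    _ ≤ 2 ^ ((1:ℝ)+ε) * (L+1) := by
        have hd : (n:ℝ)/((n:ℝ)+1) ≤ 1 := by
          rw [div_le_one (by linarith)]; linarith
        exact mul_le_of_le_one_right (by positivity) hd

lemma gterm_master (A B C : ℂ) (hC : ∀ n : ℕ, C ≠ -(n:ℂ)) (hε : 0 < (C-A-B).re) :
    ∃ K : ℝ, 0 ≤ K ∧ ∀ m : ℕ,
      ‖gterm A B C m‖ ≤ K * ((m:ℝ)+1) ^ (-(1:ℝ) - (C-A-B).re) := by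
  obtain ⟨K, hK0, hK⟩ := gterm_v_bound A B C hC hε
  refine ⟨K, hK0, fun m => ?_⟩
  have hp : (0:ℝ) < ((m:ℝ)+1) ^ ((1:ℝ) + (C-A-B).re) := Real.rpow_pos_of_pos (by positivity) _
  have hrw : ((m:ℝ)+1) ^ (-(1:ℝ) - (C-A-B).re) = (((m:ℝ)+1) ^ ((1:ℝ) + (C-A-B).re))⁻¹ := by
    rw [← Real.rpow_neg (by positivity)]
    ring_nf
  rw [hrw, ← div_eq_mul_inv, le_div_iff₀ hp]
  exact hK m

lemma summable_norm_gterm (A B C : ℂ) (hC : ∀ n : ℕ, C ≠ -(n:ℂ)) (hε : 0 < (C-A-B).re) :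
    Summable (fun m => ‖gterm A B C m‖) := by
  obtain ⟨K, hK0, hK⟩ := gterm_master A B C hC hε
  have hs : Summable (fun m : ℕ => K * ((m:ℝ)+1) ^ (-(1:ℝ) - (C-A-B).re)) := by
    refine Summable.mul_left K ?_
    have : Summable (fun m : ℕ => ((m:ℝ)) ^ (-(1:ℝ) - (C-A-B).re)) :=
      Real.summable_nat_rpow.mpr (by linarith)
    have h2 := (summable_nat_add_iff 1).mpr this
    refine h2.congr fun m => ?_
    push_cast
    ring_nf
  exact Summable.of_nonneg_of_le (fun m => norm_nonneg _) hK hs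

lemma summable_gterm (A B C : ℂ) (hC : ∀ n : ℕ, C ≠ -(n:ℂ)) (hε : 0 < (C-A-B).re) :
    Summable (gterm A B C) :=
  (summable_norm_gterm A B C hC hε).of_norm

lemma gterm_d_eq (A B C : ℂ) (hC : ∀ n : ℕ, C ≠ -(n:ℂ)) (m : ℕ) :
    C * (C-A-B) * gterm A B C m - (C-A)*(C-B) * gterm A B (C+1) m
      = (m:ℂ)*(C+m) * gterm A B (C+1) m
        - ((m:ℕ)+1 : ℂ)*(C+((m:ℕ)+1:ℂ)) * gterm A B (C+1) (m+1) := by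
  have hC1 : ∀ n : ℕ, C + 1 ≠ -(n:ℂ) := by
    intro n h
    exact hC (n+1) (by push_cast; linear_combination h)
  have hpc : poch C m ≠ 0 := poch_ne_zero hC m
  have hpq : poch (C+1) m ≠ 0 := poch_ne_zero hC1 m
  have hfac : (m.factorial : ℂ) ≠ 0 := Nat.cast_ne_zero.mpr m.factorial_ne_zero
  have hCm : C + 1 + m ≠ 0 := by
    intro h
    exact hC (m+1) (by push_cast; linear_combination h)
  have hC0 : C ≠ 0 := by
    intro h
    exact hC 0 (by simpa using h)
  have hCm0 : C + (m:ℂ) ≠ 0 := by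
    intro h
    exact hC m (by linear_combination h)
  have hm1 : ((m:ℂ)+1) ≠ 0 := by
    have := Nat.cast_add_one_ne_zero (R := ℂ) m
    push_cast at this
    exact this
  have hpc_eq : poch C m = C * poch (C+1) m / (C + m) := by
    rw [eq_div_iff hCm0]
    linear_combination - poch_shift C m
  simp only [gterm]
  rw [poch_succ A, poch_succ B, poch_succ (C+1), Nat.factorial_succ, hpc_eq]
  push_cast
  field_simp
  ring

lemma shifted_hC {C : ℂ} (hC : ∀ n : ℕ, C ≠ -(n:ℂ)) (k : ℕ) :
    ∀ n : ℕ, C + k ≠ -(n:ℂ) := by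
  intro n h
  exact hC (n + k) (by push_cast; linear_combination h)

lemma shifted_hε {A B C : ℂ} (hε : 0 < (C-A-B).re) (k : ℕ) :
    0 < (C + k - A - B).re := by
  have : (C + k - A - B) = (C - A - B) + k := by ring
  rw [this, Complex.add_re, Complex.natCast_re]
  positivity

lemma tendsto_u_zero (A B C : ℂ) (hC : ∀ n : ℕ, C ≠ -(n:ℂ)) (hε : 0 < (C-A-B).re) :
    Tendsto (fun M : ℕ => (M:ℂ)*(C+M) * gterm A B (C+1) M) atTop (𝓝 0) := by
  set ε := (C-A-B).re with hεdef
  have hC1 : ∀ n : ℕ, C + 1 ≠ -(n:ℂ) := by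
    have := shifted_hC hC 1
    simpa using this
  have hε1 : 0 < (C + 1 - A - B).re := by
    have := shifted_hε hε 1
    simpa using this
  obtain ⟨K, hK0, hK⟩ := gterm_master A B (C+1) hC1 hε1
  have hre : (C + 1 - A - B).re = 1 + ε := by
    have : (C + 1 - A - B) = (C - A - B) + 1 := by ring
    rw [this, Complex.add_re]
    simp [hεdef]
    ring
  set c' : ℝ := max 1 ‖C‖ with hc'
  have hbound : ∀ M : ℕ, ‖(M:ℂ)*(C+M) * gterm A B (C+1) M‖
      ≤ K * c' * ((M:ℝ)+1) ^ (-ε) := by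
    intro M
    have h1 : ‖(M:ℂ)*(C+M)‖ ≤ c' * ((M:ℝ)+1)^2 := by
      rw [norm_mul]
      have e1 : ‖(M:ℂ)‖ = (M:ℝ) := by simp
      have e2 : ‖C + (M:ℂ)‖ ≤ ‖C‖ + M := by
        refine (norm_add_le _ _).trans ?_
        simp
      have hM0 : (0:ℝ) ≤ M := Nat.cast_nonneg M
      have hc1 : (1:ℝ) ≤ c' := le_max_left _ _
      have hcC : ‖C‖ ≤ c' := le_max_right _ _
      rw [e1]
      nlinarith [mul_le_mul_of_nonneg_left e2 hM0, mul_le_mul_of_nonneg_right hcC hM0,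
        mul_le_mul_of_nonneg_left hc1 (mul_nonneg hM0 hM0)]
    have h2 := hK M
    rw [hre] at h2
    have hMp : (0:ℝ) < (M:ℝ)+1 := by positivity
    have key : ((M:ℝ)+1)^2 * ((M:ℝ)+1) ^ (-(1:ℝ) - (1+ε)) = ((M:ℝ)+1) ^ (-ε) := by
      rw [← Real.rpow_natCast ((M:ℝ)+1) 2, ← Real.rpow_add hMp]
      congr 1
      push_cast
      ring
    calc ‖(M:ℂ)*(C+M) * gterm A B (C+1) M‖
        = ‖(M:ℂ)*(C+M)‖ * ‖gterm A B (C+1) M‖ := norm_mul _ _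
      _ ≤ (c' * ((M:ℝ)+1)^2) * (K * ((M:ℝ)+1) ^ (-(1:ℝ) - (1+ε))) := by
          refine mul_le_mul h1 h2 (norm_nonneg _) (by positivity)
      _ = K * c' * (((M:ℝ)+1)^2 * ((M:ℝ)+1) ^ (-(1:ℝ) - (1+ε))) := by ring
      _ = K * c' * ((M:ℝ)+1) ^ (-ε) := by rw [key]
  refine squeeze_zero_norm hbound ?_
  have h0 : Tendsto (fun M : ℕ => ((M:ℝ)+1) ^ (-ε)) atTop (𝓝 0) := by
    have h1 : Tendsto (fun x : ℝ => x ^ (-ε)) atTop (𝓝 0) := tendsto_rpow_neg_atTop hε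
    have h2 : Tendsto (fun M : ℕ => (M:ℝ)+1) atTop atTop :=
      tendsto_atTop_add_const_right _ 1 tendsto_natCast_atTop_atTop
    exact h1.comp h2
  have := h0.const_mul (K * c')
  simpa using this

lemma gauss_step (A B C : ℂ) (hC : ∀ n : ℕ, C ≠ -(n:ℂ)) (hε : 0 < (C-A-B).re) :
    C * (C-A-B) * ∑' m, gterm A B C m = (C-A)*(C-B) * ∑' m, gterm A B (C+1) m := by
  have hC1 : ∀ n : ℕ, C + 1 ≠ -(n:ℂ) := by simpa using shifted_hC hC 1
  have hε1 : 0 < (C + 1 - A - B).re := by simpa using shifted_hε hε 1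
  have hs1 : Summable (gterm A B C) := summable_gterm A B C hC hε
  have hs2 : Summable (gterm A B (C+1)) := summable_gterm A B (C+1) hC1 hε1
  set u : ℕ → ℂ := fun M => (M:ℂ)*(C+M) * gterm A B (C+1) M with hu
  set d : ℕ → ℂ := fun m => C * (C-A-B) * gterm A B C m - (C-A)*(C-B) * gterm A B (C+1) m
    with hd
  have hdsum : Summable d := (hs1.mul_left _).sub (hs2.mul_left _)
  have hpartial : ∀ M : ℕ, ∑ m ∈ range M, d m = - u M := by
    intro M
    have : ∀ m, d m = u m - u (m+1) := by
      intro m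
      have := gterm_d_eq A B C hC m
      simp only [hd, hu]
      push_cast
      push_cast at this
      linear_combination this
    calc ∑ m ∈ range M, d m = ∑ m ∈ range M, (u m - u (m+1)) :=
          Finset.sum_congr rfl fun m _ => this m
      _ = u 0 - u M := Finset.sum_range_sub' u M
      _ = - u M := by simp [hu, poch_zero]
  have h1 : Tendsto (fun M : ℕ => ∑ m ∈ range M, d m) atTop (𝓝 (∑' m, d m)) :=
    hdsum.hasSum.tendsto_sum_nat
  have h2 : Tendsto (fun M : ℕ => ∑ m ∈ range M, d m) atTop (𝓝 0) := by
    have := (tendsto_u_zero A B C hC hε).neg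
    rw [neg_zero] at this
    exact Tendsto.congr (fun M => (hpartial M).symm) this
  have hzero : ∑' m, d m = 0 := tendsto_nhds_unique h1 h2
  have hts : ∑' m, d m
      = C * (C-A-B) * ∑' m, gterm A B C m - (C-A)*(C-B) * ∑' m, gterm A B (C+1) m := by
    rw [hd]
    rw [Summable.tsum_sub (hs1.mul_left _) (hs2.mul_left _), tsum_mul_left, tsum_mul_left]
  rw [hts] at hzero
  linear_combination hzero

lemma poch_ofReal (r : ℝ) (m : ℕ) :
    poch ((r:ℝ):ℂ) m = (((∏ j ∈ range m, (r + j)) : ℝ) : ℂ) := by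
  rw [poch_eq_prod]
  push_cast
  rfl


lemma gterm_zero (A B C : ℂ) : gterm A B C 0 = 1 := by
  simp [gterm, poch_zero]

lemma norm_gterm_eq (A B C : ℂ) (m : ℕ) :
    ‖gterm A B C m‖ = ‖poch A m‖ * ‖poch B m‖ / (‖poch C m‖ * m.factorial) := by
  rw [gterm, norm_div, norm_mul, norm_mul]
  congr 2
  simp

lemma norm_shift_lower (C : ℂ) (K j : ℕ) : (K:ℝ) + j - ‖C‖ ≤ ‖C + K + j‖ := by
  have e : ‖((K:ℂ) + j)‖ = (K:ℝ) + j := by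
    have h : ((K:ℂ) + (j:ℂ)) = (((K + j : ℕ)):ℂ) := by push_cast; ring
    rw [h, Complex.norm_natCast]
    push_cast
    ring
  have h2 := norm_sub_norm_le ((K:ℂ) + j) (-C)
  rw [norm_neg, sub_neg_eq_add, e] at h2
  calc (K:ℝ) + j - ‖C‖ ≤ ‖(K:ℂ) + j + C‖ := by linarith
    _ = ‖C + K + j‖ := by ring_nf

lemma gauss_tail (A B C : ℂ) (hC : ∀ n : ℕ, C ≠ -(n:ℂ)) :
    Tendsto (fun K : ℕ => ∑' m, gterm A B (C + K) m) atTop (𝓝 1) := by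
  set α := ‖A‖ with hα
  set β := ‖B‖ with hβ
  set cn := ‖C‖ with hcn
  have hα0 : 0 ≤ α := norm_nonneg _
  have hβ0 : 0 ≤ β := norm_nonneg _
  have hcn0 : 0 ≤ cn := norm_nonneg _
  set K₀ : ℕ := ⌈cn + α + β⌉₊ + 2 with hK₀def
  have hKc : cn + α + β ≤ (⌈cn + α + β⌉₊ : ℝ) := Nat.le_ceil _
  set p : ℝ := (K₀:ℝ) - cn with hpdef
  have hp1 : α + β + 1 ≤ p := by
    rw [hpdef, hK₀def]
    push_cast
    linarith
  have hp0 : 0 < p := by linarith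
  -- the dominating bound
  set W : ℕ → ℝ := fun m => ‖gterm ((α:ℂ)) ((β:ℂ)) ((p:ℂ)) m‖ with hW
  have hWsum : Summable W := by
    refine summable_norm_gterm _ _ _ ?_ ?_
    · intro n h
      have : p = -(n:ℝ) := by exact_mod_cast h
      have : (0:ℝ) ≤ (n:ℝ) := Nat.cast_nonneg n
      linarith [‹p = -(n:ℝ)›]
    · have : ((p:ℂ) - α - β).re = p - α - β := by simp
      rw [this]
      linarith
  have hWeq : ∀ m, W m = (∏ j ∈ range m, (α + j)) * (∏ j ∈ range m, (β + j)) /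
      ((∏ j ∈ range m, (p + j)) * m.factorial) := by
    intro m
    rw [hW]
    simp only [gterm, poch_ofReal]
    rw [norm_div, norm_mul, norm_mul]
    have e1 : ∀ r : ℝ, 0 ≤ r → ∀ k : ℕ, ‖((∏ j ∈ range k, (r + j) : ℝ) : ℂ)‖
        = ∏ j ∈ range k, (r + j) := by
      intro r hr k
      rw [Complex.norm_real]
      exact abs_of_nonneg (Finset.prod_nonneg fun j _ => by positivity)
    rw [e1 α hα0, e1 β hβ0, e1 p hp0.le]
    congr 1
    simp
  -- pointwise limits
  set g : ℕ → ℂ := fun m => if m = 0 then 1 else 0 with hg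
  have hab : ∀ m : ℕ, Tendsto (fun K : ℕ => gterm A B (C + K) m) atTop (𝓝 (g m)) := by
    intro m
    match m with
    | 0 =>
      simp only [gterm_zero, hg, if_pos rfl]
      exact tendsto_const_nhds
    | Nat.succ m =>
      simp only [hg, if_neg (Nat.succ_ne_zero m)]
      have hbd : ∀ᶠ K : ℕ in atTop, ‖gterm A B (C + K) (m+1)‖
          ≤ (‖poch A (m+1)‖ * ‖poch B (m+1)‖ / (m+1).factorial) * (1 / ((K:ℝ) - cn)) := by
        refine eventually_atTop.mpr ⟨⌈cn⌉₊ + 1, fun K hK => ?_⟩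
        have hKcn : cn + 1 ≤ (K:ℝ) := by
          have h1 : cn ≤ (⌈cn⌉₊ : ℝ) := Nat.le_ceil _
          have h2 : ((⌈cn⌉₊ + 1 : ℕ) : ℝ) ≤ K := by exact_mod_cast hK
          push_cast at h2
          linarith
        have hlow : (K:ℝ) - cn ≤ ‖poch (C + K) (m+1)‖ := by
          have h1 : ∀ j : ℕ, ((K:ℝ) - cn) + j ≤ ‖(C + K) + j‖ := by
            intro j
            have h7 := norm_shift_lower C K j
            calc ((K:ℝ) - cn) + j = ((K:ℝ) + j) - cn := by ring
              _ ≤ ‖C + K + j‖ := by rw [hcn]; linarith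
          have h2 := prod_le_norm_poch h1 (by linarith) (m+1)
          refine le_trans ?_ h2
          rw [Finset.prod_range_succ']
          have h5 : (1:ℝ) ≤ ∏ i ∈ range m, (((K:ℝ) - cn) + ((i:ℕ)+1:ℕ)) := by
            calc (1:ℝ) = ∏ i ∈ range m, (1:ℝ) := by simp
              _ ≤ _ := by
                  refine Finset.prod_le_prod (fun i _ => by norm_num) (fun i _ => ?_)
                  have : (0:ℝ) ≤ (i:ℝ) := Nat.cast_nonneg i
                  push_cast
                  linarith
          have hc0 : (((K:ℝ) - cn) + ((0:ℕ):ℝ)) = (K:ℝ) - cn := by norm_num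
          rw [hc0]
          calc (K:ℝ) - cn = 1 * ((K:ℝ) - cn) := by ring
            _ ≤ (∏ i ∈ range m, (((K:ℝ) - cn) + ((i:ℕ)+1:ℕ))) * ((K:ℝ) - cn) :=
                mul_le_mul_of_nonneg_right h5 (by linarith)
        rw [norm_gterm_eq]
        have hfpos : (0:ℝ) < ((m+1).factorial : ℝ) := by positivity
        have hKp : (0:ℝ) < (K:ℝ) - cn := by linarith
        calc ‖poch A (m+1)‖ * ‖poch B (m+1)‖ / (‖poch (C + K) (m+1)‖ * (m+1).factorial)
            ≤ ‖poch A (m+1)‖ * ‖poch B (m+1)‖ / (((K:ℝ) - cn) * (m+1).factorial) := by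
              refine div_le_div_of_nonneg_left ?_ (by positivity) ?_
              · positivity
              · exact mul_le_mul_of_nonneg_right hlow hfpos.le
          _ = (‖poch A (m+1)‖ * ‖poch B (m+1)‖ / (m+1).factorial) * (1 / ((K:ℝ) - cn)) := by
              rw [mul_comm (((K:ℝ) - cn)) ((((m+1).factorial : ℕ)) : ℝ), mul_one_div, div_div]
      refine squeeze_zero_norm' hbd ?_
      have h2 : Tendsto (fun K : ℕ => (K:ℝ) - cn) atTop atTop :=
        tendsto_atTop_add_const_right _ (-cn) tendsto_natCast_atTop_atTop
      have h3 : Tendsto (fun K : ℕ => 1 / ((K:ℝ) - cn)) atTop (𝓝 0) := by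
        simp only [one_div]; exact h2.inv_tendsto_atTop
      have := h3.const_mul (‖poch A (m+1)‖ * ‖poch B (m+1)‖ / (m+1).factorial)
      simpa using this
  -- the uniform bound
  have h_bound : ∀ᶠ K : ℕ in atTop, ∀ m : ℕ, ‖gterm A B (C + K) m‖ ≤ W m := by
    refine eventually_atTop.mpr ⟨K₀, fun K hK => fun m => ?_⟩
    have hKK : (K₀:ℝ) ≤ (K:ℝ) := by exact_mod_cast hK
    rw [norm_gterm_eq, hWeq m]
    have hlowfac : ∀ j : ℕ, p + j ≤ ‖(C + K) + j‖ := by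
      intro j
      have h7 := norm_shift_lower C K j
      have h8 : p + j ≤ ((K:ℝ) + j) - cn := by
        rw [hpdef]
        linarith
      calc p + j ≤ ((K:ℝ) + j) - cn := h8
        _ ≤ ‖C + K + j‖ := by rw [hcn]; linarith
    have hlow := prod_le_norm_poch hlowfac hp0.le m
    have hppos : (0:ℝ) < ∏ j ∈ range m, (p + j) :=
      Finset.prod_pos fun j _ => by positivity
    have hfpos : (0:ℝ) < (m.factorial : ℝ) := by positivity
    refine div_le_div₀ ?_ ?_ (by positivity) ?_
    · positivity
    · refine mul_le_mul (norm_poch_le A m) (norm_poch_le B m) (norm_nonneg _) ?_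
      exact Finset.prod_nonneg fun j _ => by positivity
    · exact mul_le_mul_of_nonneg_right hlow hfpos.le
  have hmain := tendsto_tsum_of_dominated_convergence hWsum hab h_bound
  have hgsum : ∑' m, g m = 1 := by
    rw [hg]
    exact tsum_ite_eq 0 1
  rw [hgsum] at hmain
  exact hmain

lemma gauss_iter (A B C : ℂ) (hC : ∀ n : ℕ, C ≠ -(n:ℂ)) (hε : 0 < (C-A-B).re) (K : ℕ) :
    poch C K * poch (C-A-B) K * ∑' m, gterm A B C m
      = poch (C-A) K * poch (C-B) K * ∑' m, gterm A B (C + K) m := by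
  induction K with
  | zero => simp [poch_zero]
  | succ K ih =>
    have hCK : ∀ n : ℕ, C + K ≠ -(n:ℂ) := shifted_hC hC K
    have hεK : 0 < ((C + K) - A - B).re := by
      have := shifted_hε hε K
      convert this using 2
    have step := gauss_step A B (C + K) hCK hεK
    have hcast : C + ((K+1 : ℕ) : ℂ) = (C + K) + 1 := by push_cast; ring
    rw [hcast]
    rw [poch_succ C, poch_succ (C-A-B), poch_succ (C-A), poch_succ (C-B)]
    linear_combination ((C + K) * ((C-A-B) + K)) * ih
      + (poch (C-A) K * poch (C-B) K) * step

lemma gauss_prod_tendsto (A B C : ℂ) (hC : ∀ n : ℕ, C ≠ -(n:ℂ)) (hε : 0 < (C-A-B).re)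
    (hCA : ∀ n : ℕ, C - A ≠ -(n:ℂ)) (hCB : ∀ n : ℕ, C - B ≠ -(n:ℂ)) :
    Tendsto (fun K : ℕ => poch (C-A) K * poch (C-B) K / (poch C K * poch (C-A-B) K))
      atTop (𝓝 (Complex.Gamma C * Complex.Gamma (C-A-B) /
        (Complex.Gamma (C-A) * Complex.Gamma (C-B)))) := by
  have hCAB : ∀ n : ℕ, C - A - B ≠ -(n:ℂ) := by
    intro n h
    have : (C - A - B).re = -(n:ℝ) := by rw [h]; simp
    have hn : (0:ℝ) ≤ (n:ℝ) := Nat.cast_nonneg n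
    linarith
  have hGS : ∀ z : ℂ, (∀ j : ℕ, z ≠ -(j:ℂ)) → ∀ K : ℕ, 1 ≤ K → GammaSeq z K ≠ 0 := by
    intro z hz K hK
    have h1 : GammaSeq z K = (K:ℂ) ^ z * (K.factorial : ℂ) / poch z (K + 1) := by
      rw [Complex.GammaSeq, poch_eq_prod]
    rw [h1]
    have hK0 : (K:ℂ) ≠ 0 := Nat.cast_ne_zero.mpr (by omega)
    have : (K:ℂ) ^ z ≠ 0 := by simp [Complex.cpow_eq_zero_iff, hK0]
    exact div_ne_zero (mul_ne_zero this (Nat.cast_ne_zero.mpr K.factorial_ne_zero))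
      (poch_ne_zero hz _)
  have key : ∀ K : ℕ, 1 ≤ K →
      poch (C-A) (K+1) * poch (C-B) (K+1) / (poch C (K+1) * poch (C-A-B) (K+1))
        = GammaSeq C K * GammaSeq (C-A-B) K / (GammaSeq (C-A) K * GammaSeq (C-B) K) := by
    intro K hK
    have hK0 : (K:ℂ) ≠ 0 := Nat.cast_ne_zero.mpr (by omega)
    have hfac : (K.factorial : ℂ) ≠ 0 := Nat.cast_ne_zero.mpr K.factorial_ne_zero
    have hpow : (K:ℂ) ^ (C-A) * (K:ℂ) ^ (C-B) = (K:ℂ) ^ C * (K:ℂ) ^ (C-A-B) := by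
      rw [← Complex.cpow_add _ _ hK0, ← Complex.cpow_add _ _ hK0]
      ring_nf
    rw [poch_eq_gammaSeq hK, poch_eq_gammaSeq hK, poch_eq_gammaSeq hK, poch_eq_gammaSeq hK]
    have h1 := hGS C hC K hK
    have h2 := hGS (C-A-B) hCAB K hK
    have h3 := hGS (C-A) hCA K hK
    have h4 := hGS (C-B) hCB K hK
    have hc : (K:ℂ) ^ C ≠ 0 := by simp [Complex.cpow_eq_zero_iff, hK0]
    have hcab : (K:ℂ) ^ (C-A-B) ≠ 0 := by simp [Complex.cpow_eq_zero_iff, hK0]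
    field_simp
    linear_combination hpow
  have hlim : Tendsto (fun K : ℕ =>
      GammaSeq C K * GammaSeq (C-A-B) K / (GammaSeq (C-A) K * GammaSeq (C-B) K)) atTop
      (𝓝 (Complex.Gamma C * Complex.Gamma (C-A-B) /
        (Complex.Gamma (C-A) * Complex.Gamma (C-B)))) := by
    refine Filter.Tendsto.div
      ((Complex.GammaSeq_tendsto_Gamma C).mul (Complex.GammaSeq_tendsto_Gamma (C-A-B)))
      ((Complex.GammaSeq_tendsto_Gamma (C-A)).mul (Complex.GammaSeq_tendsto_Gamma (C-B))) ?_
    exact mul_ne_zero (Complex.Gamma_ne_zero hCA) (Complex.Gamma_ne_zero hCB)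
  rw [show (fun K : ℕ => poch (C-A) K * poch (C-B) K / (poch C K * poch (C-A-B) K))
      = fun K => poch (C-A) K * poch (C-B) K / (poch C K * poch (C-A-B) K) from rfl]
  rw [← tendsto_add_atTop_iff_nat 1]
  refine Tendsto.congr' ?_ hlim
  filter_upwards [eventually_ge_atTop 1] with K hK
  exact (key K hK).symm

theorem gauss_sum (A B C : ℂ) (hC : ∀ n : ℕ, C ≠ -(n:ℂ)) (hε : 0 < (C-A-B).re) :
    ∑' m, gterm A B C m = Complex.Gamma C * Complex.Gamma (C-A-B) /
      (Complex.Gamma (C-A) * Complex.Gamma (C-B)) := by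
  have hCAB : ∀ n : ℕ, C - A - B ≠ -(n:ℂ) := by
    intro n h
    have : (C - A - B).re = -(n:ℝ) := by rw [h]; simp
    have hn : (0:ℝ) ≤ (n:ℝ) := Nat.cast_nonneg n
    linarith
  by_cases hCA : ∃ k : ℕ, C - A = -(k:ℂ)
  · obtain ⟨k, hk⟩ := hCA
    have h0 : poch (C-A) (k+1) = 0 := poch_eventually_zero k hk (Nat.lt_succ_self k)
    have hiter := gauss_iter A B C hC hε (k+1)
    rw [h0, zero_mul, zero_mul] at hiter
    have hne : poch C (k+1) * poch (C-A-B) (k+1) ≠ 0 :=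
      mul_ne_zero (poch_ne_zero hC _) (poch_ne_zero hCAB _)
    have hS : ∑' m, gterm A B C m = 0 := by
      rcases mul_eq_zero.mp hiter with h | h
      · exact absurd h hne
      · exact h
    rw [hS]
    have hG : Complex.Gamma (C-A) = 0 := by
      rw [Complex.Gamma_eq_zero_iff]
      exact ⟨k, hk⟩
    rw [hG, zero_mul, div_zero]
  by_cases hCB : ∃ k : ℕ, C - B = -(k:ℂ)
  · obtain ⟨k, hk⟩ := hCB
    have h0 : poch (C-B) (k+1) = 0 := poch_eventually_zero k hk (Nat.lt_succ_self k)
    have hiter := gauss_iter A B C hC hε (k+1)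
    rw [h0, mul_zero, zero_mul] at hiter
    have hne : poch C (k+1) * poch (C-A-B) (k+1) ≠ 0 :=
      mul_ne_zero (poch_ne_zero hC _) (poch_ne_zero hCAB _)
    have hS : ∑' m, gterm A B C m = 0 := by
      rcases mul_eq_zero.mp hiter with h | h
      · exact absurd h hne
      · exact h
    rw [hS]
    have hG : Complex.Gamma (C-B) = 0 := by
      rw [Complex.Gamma_eq_zero_iff]
      exact ⟨k, hk⟩
    rw [hG, mul_zero, div_zero]
  push_neg at hCA hCB
  have heq : ∀ K : ℕ, ∑' m, gterm A B C m
      = (poch (C-A) K * poch (C-B) K / (poch C K * poch (C-A-B) K))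
        * ∑' m, gterm A B (C + K) m := by
    intro K
    have hne1 : poch C K ≠ 0 := poch_ne_zero hC _
    have hne2 : poch (C-A-B) K ≠ 0 := poch_ne_zero hCAB _
    have hiter := gauss_iter A B C hC hε K
    field_simp
    linear_combination hiter
  have hlim : Tendsto (fun K : ℕ =>
      (poch (C-A) K * poch (C-B) K / (poch C K * poch (C-A-B) K))
        * ∑' m, gterm A B (C + K) m) atTop
      (𝓝 ((Complex.Gamma C * Complex.Gamma (C-A-B) /
        (Complex.Gamma (C-A) * Complex.Gamma (C-B))) * 1)) :=
    (gauss_prod_tendsto A B C hC hε hCA hCB).mul (gauss_tail A B C hC)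
  have hconst : Tendsto (fun _ : ℕ => ∑' m, gterm A B C m) atTop
      (𝓝 (∑' m, gterm A B C m)) := tendsto_const_nhds
  have := tendsto_nhds_unique (hconst.congr fun K => heq K) hlim
  rw [this, mul_one]

lemma tendsto_frac (A B : ℝ) :
    Tendsto (fun n : ℕ => ((n:ℝ) + A)/((n:ℝ) + B)) atTop (𝓝 1) := by
  have hd : Tendsto (fun n : ℕ => (n:ℝ) + B) atTop atTop :=
    tendsto_atTop_add_const_right _ B tendsto_natCast_atTop_atTop
  have h0 : Tendsto (fun n : ℕ => (A - B)/((n:ℝ) + B)) atTop (𝓝 0) := by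
    simp only [div_eq_mul_inv]
    simpa using (hd.inv_tendsto_atTop).const_mul (A - B)
  have h1 : Tendsto (fun n : ℕ => 1 + (A - B)/((n:ℝ) + B)) atTop (𝓝 1) := by
    simpa using (tendsto_const_nhds (x := (1:ℝ)) (f := atTop)).add h0
  refine Tendsto.congr' ?_ h1
  filter_upwards [hd.eventually_gt_atTop 0] with n hn
  field_simp
  ring

lemma norm_natCast_add_one (n : ℕ) : ‖((n:ℂ) + 1)‖ = (n:ℝ) + 1 := by
  have : ((n:ℂ) + 1) = (((n + 1 : ℕ)):ℂ) := by push_cast; ring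
  rw [this, Complex.norm_natCast]
  push_cast
  ring

lemma norm_add_nat_lower (z : ℂ) (n : ℕ) : (n:ℝ) - ‖z‖ ≤ ‖z + n‖ := by
  have h2 := norm_sub_norm_le ((n:ℂ)) (-z)
  rw [norm_neg, sub_neg_eq_add, Complex.norm_natCast] at h2
  calc (n:ℝ) - ‖z‖ ≤ ‖(n:ℂ) + z‖ := by linarith
    _ = ‖z + n‖ := by rw [add_comm]

lemma norm_add_nat_upper (z : ℂ) (n : ℕ) : ‖z + n‖ ≤ (n:ℝ) + ‖z‖ := by
  refine (norm_add_le _ _).trans ?_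
  rw [Complex.norm_natCast]
  linarith

lemma summable_norm_2f1 (w b z x : ℂ) (hz : ∀ j : ℕ, z ≠ -(j:ℂ)) (hx : ‖x‖ < 1) :
    Summable (fun n => ‖poch w n * poch b n / (poch z n * (n.factorial:ℂ)) * x ^ n‖) := by
  set ρ := ‖x‖ with hρ
  have hρ0 : 0 ≤ ρ := norm_nonneg _
  set r := (1 + ρ)/2 with hr
  have hr1 : r < 1 := by rw [hr]; linarith
  have hρr : ρ < r := by rw [hr]; linarith
  set H : ℕ → ℂ := fun n => poch w n * poch b n / (poch z n * (n.factorial:ℂ)) * x ^ n with hH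
  have hRlim : Tendsto (fun n : ℕ =>
      (((n:ℝ) + ‖w‖)/((n:ℝ) + 1)) * (((n:ℝ) + ‖b‖)/((n:ℝ) + (-‖z‖))) * ρ) atTop (𝓝 ρ) := by
    have := ((tendsto_frac ‖w‖ 1).mul (tendsto_frac ‖b‖ (-‖z‖))).mul_const ρ
    simpa using this
  have hev1 : ∀ᶠ n : ℕ in atTop,
      (((n:ℝ) + ‖w‖)/((n:ℝ) + 1)) * (((n:ℝ) + ‖b‖)/((n:ℝ) + (-‖z‖))) * ρ < r :=
    hRlim.eventually_lt_const hρr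
  have hev2 : ∀ᶠ n : ℕ in atTop, ‖z‖ < (n:ℝ) := by
    have : Tendsto (fun n : ℕ => (n:ℝ)) atTop atTop := tendsto_natCast_atTop_atTop
    exact this.eventually_gt_atTop ‖z‖
  refine summable_of_ratio_norm_eventually_le hr1 ?_
  filter_upwards [hev1, hev2] with n hn1 hn2
  rw [norm_norm, norm_norm]
  show ‖H (n+1)‖ ≤ r * ‖H n‖
  have hzn : z + (n:ℂ) ≠ 0 := by
    intro h
    exact hz n (by linear_combination h)
  have hn1' : ((n:ℂ) + 1) ≠ 0 := by
    intro h
    have := congrArg Complex.re h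
    simp at this
    have : (0:ℝ) ≤ (n:ℝ) := Nat.cast_nonneg n
    linarith [‹(n:ℝ) + 1 = 0›]
  have hkey : H (n+1) = H n * ((w + n) * (b + n) * x / ((z + n) * ((n:ℂ) + 1))) := by
    rw [hH]
    simp only
    rw [poch_succ w, poch_succ b, poch_succ z, Nat.factorial_succ, pow_succ]
    have hpz : poch z n ≠ 0 := poch_ne_zero hz n
    have hf : (n.factorial : ℂ) ≠ 0 := Nat.cast_ne_zero.mpr n.factorial_ne_zero
    push_cast
    field_simp
  rw [hkey, norm_mul]
  have hfacbound : ‖(w + n) * (b + n) * x / ((z + n) * ((n:ℂ) + 1))‖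
      ≤ (((n:ℝ) + ‖w‖)/((n:ℝ) + 1)) * (((n:ℝ) + ‖b‖)/((n:ℝ) + (-‖z‖))) * ρ := by
    rw [norm_div, norm_mul, norm_mul, norm_mul, norm_natCast_add_one]
    have h1 : ‖w + (n:ℂ)‖ ≤ (n:ℝ) + ‖w‖ := norm_add_nat_upper w n
    have h2 : ‖b + (n:ℂ)‖ ≤ (n:ℝ) + ‖b‖ := norm_add_nat_upper b n
    have h3 : (n:ℝ) - ‖z‖ ≤ ‖z + (n:ℂ)‖ := norm_add_nat_lower z n
    have h4 : (0:ℝ) < (n:ℝ) - ‖z‖ := by linarith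
    have h5 : (0:ℝ) < (n:ℝ) + 1 := by positivity
    have heq : (((n:ℝ) + ‖w‖)/((n:ℝ) + 1)) * (((n:ℝ) + ‖b‖)/((n:ℝ) + (-‖z‖))) * ρ
        = (((n:ℝ) + ‖w‖) * ((n:ℝ) + ‖b‖) * ρ) / (((n:ℝ) - ‖z‖) * ((n:ℝ) + 1)) := by
      rw [div_mul_div_comm, div_mul_eq_mul_div, ← sub_eq_add_neg, mul_comm ((n:ℝ)+1)]
    rw [heq]
    refine div_le_div₀ ?_ ?_ (by positivity) ?_
    · positivity
    · refine mul_le_mul (mul_le_mul h1 h2 (norm_nonneg _) (by positivity)) hρ.ge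
        (norm_nonneg _) (by positivity)
    · exact mul_le_mul_of_nonneg_right h3 h5.le
  calc ‖H n‖ * ‖(w + n) * (b + n) * x / ((z + n) * ((n:ℂ) + 1))‖
      ≤ ‖H n‖ * ((((n:ℝ) + ‖w‖)/((n:ℝ) + 1)) * (((n:ℝ) + ‖b‖)/((n:ℝ) + (-‖z‖))) * ρ) :=
        mul_le_mul_of_nonneg_left hfacbound (norm_nonneg _)
    _ ≤ ‖H n‖ * r := mul_le_mul_of_nonneg_left hn1.le (norm_nonneg _)
    _ = r * ‖H n‖ := mul_comm _ _

lemma ratio_bound {u : ℝ} (hu : 1 ≤ u) (s : ℕ) (z δ : ℂ) (hδ : ‖δ‖ ≤ s)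
    (hz : ∀ j : ℕ, u + j ≤ ‖z + j‖) (n : ℕ) :
    ‖poch (z + δ) n‖ ≤ ((n:ℝ)+1)^s * ‖poch z n‖ := by
  rw [norm_poch_eq, norm_poch_eq]
  have hv0 : ∀ j : ℕ, 0 < ‖z + (j:ℂ)‖ := by
    intro j
    have := hz j
    have : (0:ℝ) ≤ (j:ℝ) := Nat.cast_nonneg j
    linarith [hz j]
  have step1 : ∏ j ∈ range n, ‖(z + δ) + (j:ℂ)‖ ≤ ∏ j ∈ range n, (‖z + (j:ℂ)‖ + s) := by
    refine Finset.prod_le_prod (fun j _ => norm_nonneg _) fun j _ => ?_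
    have he : (z + δ) + (j:ℂ) = (z + j) + δ := by ring
    rw [he]
    refine (norm_add_le _ _).trans ?_
    linarith [hδ]
  refine step1.trans ?_
  -- now a real-number argument
  set v : ℕ → ℝ := fun j => ‖z + (j:ℂ)‖ with hvdef
  have claim2 : (∏ j ∈ range n, (v j + s)) * (∏ j ∈ range n, (u + j))
      ≤ (∏ j ∈ range n, v j) * (∏ j ∈ range n, (u + s + j)) := by
    rw [← Finset.prod_mul_distrib, ← Finset.prod_mul_distrib]
    refine Finset.prod_le_prod (fun j _ => ?_) (fun j _ => ?_)
    · have := hv0 j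
      have hj : (0:ℝ) ≤ (j:ℝ) := Nat.cast_nonneg j
      positivity
    · have h1 := hz j
      have hs0 : (0:ℝ) ≤ (s:ℝ) := Nat.cast_nonneg s
      nlinarith [hv0 j]
  have claim3 : (∏ j ∈ range n, (u + s + j)) * (∏ i ∈ range s, (u + i))
      = (∏ j ∈ range n, (u + j)) * (∏ i ∈ range s, (u + n + i)) := by
    have e1 : ∏ t ∈ range (s + n), (u + t) = (∏ i ∈ range s, (u + i)) *
        ∏ j ∈ range n, (u + s + j) := by
      rw [Finset.prod_range_add]
      congr 1
      refine Finset.prod_congr rfl fun j _ => ?_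
      push_cast
      ring
    have e2 : ∏ t ∈ range (n + s), (u + t) = (∏ j ∈ range n, (u + j)) *
        ∏ i ∈ range s, (u + n + i) := by
      rw [Finset.prod_range_add]
      congr 1
      refine Finset.prod_congr rfl fun i _ => ?_
      push_cast
      ring
    rw [mul_comm]
    rw [← e1, ← e2, Nat.add_comm s n]
  have claim4 : (∏ i ∈ range s, (u + n + i)) ≤ ((n:ℝ)+1)^s * (∏ i ∈ range s, (u + i)) := by
    have : ((n:ℝ)+1)^s = ∏ _i ∈ range s, ((n:ℝ)+1) := by
      rw [Finset.prod_const, Finset.card_range]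
    rw [this, ← Finset.prod_mul_distrib]
    refine Finset.prod_le_prod (fun i _ => ?_) (fun i _ => ?_)
    · have hi : (0:ℝ) ≤ (i:ℝ) := Nat.cast_nonneg i
      have hn : (0:ℝ) ≤ (n:ℝ) := Nat.cast_nonneg n
      positivity
    · have hi : (0:ℝ) ≤ (i:ℝ) := Nat.cast_nonneg i
      have hn : (0:ℝ) ≤ (n:ℝ) := Nat.cast_nonneg n
      nlinarith
  have hP : (0:ℝ) < ∏ j ∈ range n, (u + j) := by
    refine Finset.prod_pos fun j _ => ?_
    have hj : (0:ℝ) ≤ (j:ℝ) := Nat.cast_nonneg j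
    linarith
  have hQ : (0:ℝ) < ∏ i ∈ range s, (u + i) := by
    refine Finset.prod_pos fun i _ => ?_
    have hi : (0:ℝ) ≤ (i:ℝ) := Nat.cast_nonneg i
    linarith
  have hB : (0:ℝ) ≤ ∏ j ∈ range n, v j :=
    Finset.prod_nonneg fun j _ => (hv0 j).le
  have main : (∏ j ∈ range n, (v j + s)) * ((∏ j ∈ range n, (u + j)) * (∏ i ∈ range s, (u + i)))
      ≤ (((n:ℝ)+1)^s * ∏ j ∈ range n, v j) *
        ((∏ j ∈ range n, (u + j)) * (∏ i ∈ range s, (u + i))) := by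
    calc (∏ j ∈ range n, (v j + s)) * ((∏ j ∈ range n, (u + j)) * (∏ i ∈ range s, (u + i)))
        = ((∏ j ∈ range n, (v j + s)) * (∏ j ∈ range n, (u + j))) * (∏ i ∈ range s, (u + i)) := by
          ring
      _ ≤ ((∏ j ∈ range n, v j) * (∏ j ∈ range n, (u + s + j))) * (∏ i ∈ range s, (u + i)) :=
          mul_le_mul_of_nonneg_right claim2 hQ.le
      _ = (∏ j ∈ range n, v j) * ((∏ j ∈ range n, (u + s + j)) * (∏ i ∈ range s, (u + i))) := by
          ring
      _ = (∏ j ∈ range n, v j) * ((∏ j ∈ range n, (u + j)) * (∏ i ∈ range s, (u + n + i))) := by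
          rw [claim3]
      _ ≤ (∏ j ∈ range n, v j) * ((∏ j ∈ range n, (u + j)) * (((n:ℝ)+1)^s * (∏ i ∈ range s, (u + i)))) := by
          refine mul_le_mul_of_nonneg_left ?_ hB
          exact mul_le_mul_of_nonneg_left claim4 hP.le
      _ = (((n:ℝ)+1)^s * ∏ j ∈ range n, v j) *
          ((∏ j ∈ range n, (u + j)) * (∏ i ∈ range s, (u + i))) := by ring
  exact le_of_mul_le_mul_right main (by positivity)

lemma summable_Bser (b1n : ℝ) (hb : 0 ≤ b1n) (s : ℕ) {ρ : ℝ} (hρ0 : 0 ≤ ρ) (hρ : ρ < 1) :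
    Summable (fun n : ℕ => (∏ i ∈ range s, ((n:ℝ)+1+i)) * (∏ j ∈ range n, (b1n+1+j))
      * ρ^n / n.factorial) := by
  set r := (1 + ρ)/2 with hr
  have hr1 : r < 1 := by rw [hr]; linarith
  have hρr : ρ < r := by rw [hr]; linarith
  set F : ℕ → ℝ := fun n => (∏ i ∈ range s, ((n:ℝ)+1+i)) * (∏ j ∈ range n, (b1n+1+j))
      * ρ^n / n.factorial with hF
  have hRlim : Tendsto (fun n : ℕ =>
      (∏ i ∈ range s, (((n:ℝ)+2+i)/((n:ℝ)+1+i))) * (((n:ℝ)+(b1n+1))/((n:ℝ)+1)) * ρ)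
      atTop (𝓝 ρ) := by
    have h1 : Tendsto (fun n : ℕ => ∏ i ∈ range s, (((n:ℝ)+2+i)/((n:ℝ)+1+i))) atTop
        (𝓝 (∏ i ∈ range s, (1:ℝ))) := by
      refine tendsto_finset_prod _ fun i _ => ?_
      have := tendsto_frac (2+(i:ℝ)) (1+(i:ℝ))
      refine this.congr fun n => ?_
      congr 1 <;> ring
    rw [Finset.prod_const_one] at h1
    have := (h1.mul (tendsto_frac (b1n+1) 1)).mul_const ρ
    simpa using this
  have hev1 := hRlim.eventually_lt_const hρr
  refine summable_of_ratio_norm_eventually_le hr1 ?_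
  filter_upwards [hev1] with n hn1
  have hFpos : ∀ m : ℕ, 0 ≤ F m := by
    intro m
    rw [hF]
    have : (0:ℝ) ≤ ∏ i ∈ range s, ((m:ℝ)+1+i) :=
      Finset.prod_nonneg fun i _ => by positivity
    have : (0:ℝ) ≤ ∏ j ∈ range m, (b1n+1+j) :=
      Finset.prod_nonneg fun j _ => by positivity
    positivity
  rw [Real.norm_of_nonneg (hFpos _), Real.norm_of_nonneg (hFpos _)]
  have hkey : F (n+1) = F n *
      ((∏ i ∈ range s, (((n:ℝ)+2+i)/((n:ℝ)+1+i))) * (((n:ℝ)+(b1n+1))/((n:ℝ)+1)) * ρ) := by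
    rw [hF]
    simp only
    have eP2 : (∏ i ∈ range s, ((((n+1:ℕ)):ℝ)+1+(i:ℝ))) = ∏ i ∈ range s, ((n:ℝ)+2+(i:ℝ)) := by
      refine Finset.prod_congr rfl fun i _ => ?_
      push_cast
      ring
    rw [Finset.prod_range_succ, Nat.factorial_succ, pow_succ, eP2, Finset.prod_div_distrib]
    have hne1 : ∀ i ∈ range s, ((n:ℝ)+1+(i:ℝ)) ≠ 0 := by
      intro i _
      have : (0:ℝ) ≤ (i:ℝ) := Nat.cast_nonneg i
      positivity
    have hprodne : (∏ i ∈ range s, ((n:ℝ)+1+(i:ℝ))) ≠ 0 :=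
      Finset.prod_ne_zero_iff.mpr hne1
    have hfacne : ((n.factorial : ℕ):ℝ) ≠ 0 := Nat.cast_ne_zero.mpr n.factorial_ne_zero
    have hn1ne : ((n:ℝ)+1) ≠ 0 := by positivity
    push_cast
    field_simp
    ring
  rw [hkey]
  calc F n * ((∏ i ∈ range s, (((n:ℝ)+2+i)/((n:ℝ)+1+i))) * (((n:ℝ)+(b1n+1))/((n:ℝ)+1)) * ρ)
      ≤ F n * r := mul_le_mul_of_nonneg_left hn1.le (hFpos n)
    _ = r * F n := mul_comm _ _



theorem F1_y_eq_one (a b1 b2 c x : ℂ) (hc : ∀ n : ℕ, c ≠ -(n : ℂ))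
    (hcb : ∀ n : ℕ, c - b2 ≠ -(n : ℂ)) (hre : 0 < (c - a - b2).re) (hx : ‖x‖ < 1) :
    F1 a b1 b2 c x 1 =
      Complex.Gamma c * Complex.Gamma (c - a - b2) /
        (Complex.Gamma (c - a) * Complex.Gamma (c - b2)) * hpg21 a b1 (c - b2) x := by
  classical
  set ρ := ‖x‖ with hρdef
  have hρ0 : (0:ℝ) ≤ ρ := norm_nonneg _
  set ψ : ℕ × ℕ → ℂ := fun p => poch a (p.1 + p.2) * poch b1 p.1 * poch b2 p.2 /
    (poch c (p.1 + p.2) * (p.1.factorial : ℂ) * (p.2.factorial : ℂ)) * x ^ p.1 with hψ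
  have hF1 : F1 a b1 b2 c x 1 = ∑' p, ψ p := by
    rw [F1]
    exact tsum_congr fun p => by rw [hψ]; simp
  set H : ℕ → ℕ → ℂ := fun m n =>
    poch (a+m) n * poch b1 n / (poch (c+m) n * (n.factorial:ℂ)) * x ^ n with hHd
  have hcmn : ∀ m : ℕ, ∀ j : ℕ, c + (m:ℂ) ≠ -(j:ℂ) := fun m => shifted_hC hc m
  have hsplit : ∀ n m : ℕ, ψ (n, m) = gterm a b2 c m * H m n := by
    intro n m
    rw [hψ, hHd]
    simp only [gterm]
    have e1 : poch a (n + m) = poch a m * poch (a+m) n := by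
      rw [Nat.add_comm n m, poch_add]
    have e2 : poch c (n + m) = poch c m * poch (c+m) n := by
      rw [Nat.add_comm n m, poch_add]
    rw [e1, e2]
    have h1 : poch c m ≠ 0 := poch_ne_zero hc m
    have h2 : poch (c+m) n ≠ 0 := poch_ne_zero (hcmn m) n
    have h3 : (n.factorial : ℂ) ≠ 0 := Nat.cast_ne_zero.mpr n.factorial_ne_zero
    have h4 : (m.factorial : ℂ) ≠ 0 := Nat.cast_ne_zero.mpr m.factorial_ne_zero
    field_simp
  have hHsum : ∀ m : ℕ, Summable (fun n => ‖H m n‖) := fun m =>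
    summable_norm_2f1 (a+m) b1 (c+m) x (hcmn m) hx
  have hnormsplit : ∀ n m : ℕ, ‖ψ (n, m)‖ = ‖gterm a b2 c m‖ * ‖H m n‖ := by
    intro n m
    rw [hsplit n m, norm_mul]
  -- uniform bound for large m
  set β1 := ‖b1‖ with hβ1
  set s : ℕ := ⌈‖a - c‖⌉₊ with hs
  set m₀ : ℕ := ⌈‖c‖⌉₊ + 1 with hm₀
  set Bser : ℕ → ℝ := fun n => (∏ i ∈ range s, ((n:ℝ)+1+i)) * (∏ j ∈ range n, (β1+1+j))
      * ρ^n / n.factorial with hBser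
  have hBsum : Summable Bser := summable_Bser β1 (norm_nonneg _) s hρ0 hx
  have hHB : ∀ m : ℕ, m₀ ≤ m → ∀ n : ℕ, ‖H m n‖ ≤ Bser n := by
    intro m hm n
    have hmc : ‖c‖ + 1 ≤ (m:ℝ) := by
      have h1 : ‖c‖ ≤ (⌈‖c‖⌉₊ : ℝ) := Nat.le_ceil _
      have h2 : ((m₀ : ℕ) : ℝ) ≤ (m:ℝ) := by exact_mod_cast hm
      rw [hm₀] at h2
      push_cast at h2
      linarith
    have hzfac : ∀ j : ℕ, (1:ℝ) + j ≤ ‖(c + m) + j‖ := by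
      intro j
      have := norm_shift_lower c m j
      have hj : (0:ℝ) ≤ (j:ℝ) := Nat.cast_nonneg j
      calc (1:ℝ) + j ≤ ((m:ℝ) + j) - ‖c‖ := by linarith
        _ ≤ ‖c + m + j‖ := this
  -- ratio bound
    have hrb : ‖poch (a+m) n‖ ≤ ((n:ℝ)+1)^s * ‖poch (c+m) n‖ := by
      have hδ : ‖a - c‖ ≤ (s:ℝ) := Nat.le_ceil _
      have h := ratio_bound le_rfl s (c+m) (a-c) hδ hzfac n
      have e : (c + (m:ℂ)) + (a - c) = a + m := by ring
      rw [e] at h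
      exact h
    have hqpos : (0:ℝ) < ‖poch (c+m) n‖ := by
      have h1 := prod_le_norm_poch hzfac (by norm_num) n
      have h2 : (0:ℝ) < ∏ j ∈ range n, ((1:ℝ) + j) :=
        Finset.prod_pos fun j _ => by positivity
      linarith
    have hHnorm : ‖H m n‖ = ‖poch (a+m) n‖ * ‖poch b1 n‖ /
        (‖poch (c+m) n‖ * n.factorial) * ρ^n := by
      rw [hHd]
      simp only
      rw [norm_mul, norm_div, norm_mul, norm_mul, norm_pow, Complex.norm_natCast, hρdef]
    rw [hHnorm, hBser]
    have hfpos : (0:ℝ) < (n.factorial : ℝ) := by positivity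
    have step2 : ‖poch (a+m) n‖ * ‖poch b1 n‖ / (‖poch (c+m) n‖ * n.factorial)
        ≤ ((n:ℝ)+1)^s * ‖poch b1 n‖ / (n.factorial : ℝ) := by
      have h1 : ‖poch (a+m) n‖ * ‖poch b1 n‖
          ≤ (((n:ℝ)+1)^s * ‖poch (c+m) n‖) * ‖poch b1 n‖ :=
        mul_le_mul_of_nonneg_right hrb (norm_nonneg _)
      calc ‖poch (a+m) n‖ * ‖poch b1 n‖ / (‖poch (c+m) n‖ * n.factorial)
          ≤ (((n:ℝ)+1)^s * ‖poch (c+m) n‖) * ‖poch b1 n‖ / (‖poch (c+m) n‖ * n.factorial) := by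
            exact div_le_div_of_nonneg_right h1 (by positivity)
        _ = ((n:ℝ)+1)^s * ‖poch b1 n‖ / (n.factorial : ℝ) := by
            have e : (((n:ℝ)+1)^s * ‖poch (c+m) n‖) * ‖poch b1 n‖
                = ‖poch (c+m) n‖ * (((n:ℝ)+1)^s * ‖poch b1 n‖) := by ring
            rw [e, mul_div_mul_left _ _ (ne_of_gt hqpos)]
    have step3 : ((n:ℝ)+1)^s ≤ ∏ i ∈ range s, ((n:ℝ)+1+i) := by
      have e : ((n:ℝ)+1)^s = ∏ _i ∈ range s, ((n:ℝ)+1) := by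
        rw [Finset.prod_const, Finset.card_range]
      rw [e]
      refine Finset.prod_le_prod (fun i _ => by positivity) (fun i _ => ?_)
      have : (0:ℝ) ≤ (i:ℝ) := Nat.cast_nonneg i
      linarith
    have step4 : ‖poch b1 n‖ ≤ ∏ j ∈ range n, (β1+1+j) := by
      refine (norm_poch_le b1 n).trans ?_
      refine Finset.prod_le_prod (fun j _ => by positivity) (fun j _ => ?_)
      rw [hβ1]
      linarith
    have hb1pos : (0:ℝ) ≤ ∏ j ∈ range n, (β1+1+j) :=
      Finset.prod_nonneg fun j _ => by positivity
    calc ‖poch (a+m) n‖ * ‖poch b1 n‖ / (‖poch (c+m) n‖ * n.factorial) * ρ^n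
        ≤ ((n:ℝ)+1)^s * ‖poch b1 n‖ / (n.factorial : ℝ) * ρ^n :=
          mul_le_mul_of_nonneg_right step2 (by positivity)
      _ ≤ (∏ i ∈ range s, ((n:ℝ)+1+i)) * (∏ j ∈ range n, (β1+1+j)) / (n.factorial : ℝ) * ρ^n := by
          refine mul_le_mul_of_nonneg_right ?_ (by positivity)
          refine div_le_div_of_nonneg_right ?_ hfpos.le
          exact mul_le_mul step3 step4 (norm_nonneg _)
            (Finset.prod_nonneg fun i _ => by positivity)
      _ = (∏ i ∈ range s, ((n:ℝ)+1+i)) * (∏ j ∈ range n, (β1+1+j)) * ρ^n / n.factorial := by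
          ring
  -- slice sums
  set Sm : ℕ → ℝ := fun m => ∑' n, ‖H m n‖ with hSm
  have hSm0 : ∀ m, 0 ≤ Sm m := fun m => tsum_nonneg fun n => norm_nonneg _
  set M' : ℝ := (∑' n, Bser n) + ∑ i ∈ range m₀, Sm i with hM'
  have hMnn : 0 ≤ ∑' n, Bser n := tsum_nonneg fun n => by
    have h1 : (0:ℝ) ≤ ∏ i ∈ range s, ((n:ℝ)+1+i) := Finset.prod_nonneg fun i _ => by positivity
    have h2 : (0:ℝ) ≤ ∏ j ∈ range n, (β1+1+j) := Finset.prod_nonneg fun j _ => by positivity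
    rw [hBser]
    positivity
  have hSmsum : 0 ≤ ∑ i ∈ range m₀, Sm i := Finset.sum_nonneg fun i _ => hSm0 i
  have hSmle : ∀ m, Sm m ≤ M' := by
    intro m
    rcases le_or_gt m₀ m with hm | hm
    · have h1 : Sm m ≤ ∑' n, Bser n := Summable.tsum_le_tsum (hHB m hm) (hHsum m) hBsum
      rw [hM']
      linarith
    · have h1 : Sm m ≤ ∑ i ∈ range m₀, Sm i :=
        Finset.single_le_sum (fun i _ => hSm0 i) (Finset.mem_range.mpr hm)
      rw [hM']
      linarith
  -- summability of the double series
  have hbfam : Summable (fun m => ∑' n, ‖ψ (n, m)‖) := by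
    have he : ∀ m, ∑' n, ‖ψ (n, m)‖ = ‖gterm a b2 c m‖ * Sm m := by
      intro m
      rw [hSm, ← tsum_mul_left]
      exact tsum_congr fun n => hnormsplit n m
    refine Summable.of_nonneg_of_le (fun m => tsum_nonneg fun n => norm_nonneg _) ?_
      (((summable_norm_gterm a b2 c hc hre)).mul_left M')
    intro m
    rw [he m]
    calc ‖gterm a b2 c m‖ * Sm m ≤ ‖gterm a b2 c m‖ * M' :=
          mul_le_mul_of_nonneg_left (hSmle m) (norm_nonneg _)
      _ = M' * ‖gterm a b2 c m‖ := mul_comm _ _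
  have hΨnorm : Summable (fun q : ℕ × ℕ => ‖ψ (q.2, q.1)‖) := by
    rw [summable_prod_of_nonneg (fun q => norm_nonneg _)]
    constructor
    · intro m
      refine Summable.of_nonneg_of_le (fun n => norm_nonneg _) ?_ ((hHsum m).mul_left
        ‖gterm a b2 c m‖)
      intro n
      rw [hnormsplit n m]
    · refine hbfam.congr fun m => ?_
      rfl
  have hψs : Summable ψ := by
    have h1 : Summable (fun q : ℕ × ℕ => ψ (q.2, q.1)) := hΨnorm.of_norm
    have h2 := h1.prod_symm
    refine h2.congr fun p => ?_
    simp [Prod.swap]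
  have hfub : ∑' p, ψ p = ∑' n : ℕ, ∑' m : ℕ, ψ (n, m) :=
    Summable.tsum_prod' hψs hψs.prod_factor
  -- evaluate inner sums via Gauss
  set Γfac : ℂ := Complex.Gamma c * Complex.Gamma (c - a - b2) /
      (Complex.Gamma (c - a) * Complex.Gamma (c - b2)) with hΓfac
  have hinner : ∀ n : ℕ, ∑' m : ℕ, ψ (n, m)
      = Γfac * (poch a n * poch b1 n / (poch (c - b2) n * (n.factorial : ℂ)) * x ^ n) := by
    intro n
    have hsplit2 : ∀ m : ℕ, ψ (n, m)
        = (poch a n * poch b1 n / (poch c n * (n.factorial:ℂ)) * x ^ n)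
          * gterm (a+n) b2 (c+n) m := by
      intro m
      rw [hψ]
      simp only [gterm]
      rw [poch_add a n m, poch_add c n m]
      have h1 : poch c n ≠ 0 := poch_ne_zero hc n
      have h2 : poch (c+n) m ≠ 0 := poch_ne_zero (hcmn n) m
      have h3 : (n.factorial : ℂ) ≠ 0 := Nat.cast_ne_zero.mpr n.factorial_ne_zero
      have h4 : (m.factorial : ℂ) ≠ 0 := Nat.cast_ne_zero.mpr m.factorial_ne_zero
      field_simp
    rw [tsum_congr hsplit2, tsum_mul_left]
    have hεn : 0 < ((c+(n:ℂ)) - (a+n) - b2).re := by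
      have e : ((c+(n:ℂ)) - (a+n) - b2) = c - a - b2 := by ring
      rw [e]
      exact hre
    have hgauss := gauss_sum (a+n) b2 (c+n) (hcmn n) hεn
    rw [hgauss]
    have e1 : ((c+(n:ℂ)) - (a+n) - b2) = c - a - b2 := by ring
    have e2 : ((c+(n:ℂ)) - (a+n)) = c - a := by ring
    have e3 : ((c+(n:ℂ)) - b2) = (c - b2) + n := by ring
    rw [e1, e2, e3, Gamma_poch hc n, Gamma_poch hcb n]
    -- now pure algebra, with possible Gamma (c-a) = 0
    by_cases hga : Complex.Gamma (c - a) = 0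
    · simp [hΓfac, hga]
    · have h1 : poch c n ≠ 0 := poch_ne_zero hc n
      have h2 : poch (c - b2) n ≠ 0 := poch_ne_zero hcb n
      have h3 : (n.factorial : ℂ) ≠ 0 := Nat.cast_ne_zero.mpr n.factorial_ne_zero
      have h4 : Complex.Gamma (c - b2) ≠ 0 := Complex.Gamma_ne_zero hcb
      rw [hΓfac]
      field_simp
  rw [hF1, hfub, tsum_congr hinner, tsum_mul_left, hpg21]
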